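/- Let p be a prime with p ≡ 1 (mod q) and n > q with base-p digit sum α_p(n) > q. Then there exists k with 0 < qk < n such that p does not divide C(n, qk); consequently, the p-adic valuation of gcd_{0<qk<n} C(n,qk) equals 0. -/

import Mathlib

/-- Greedy selection of digits: take as much as possible from each digit,
up to a total budget `r`. -/
def takeDigits : ℕ → List ℕ → List ℕ
  | _, [] => []
  | r, l :: L => min r l :: takeDigits (r - min r l) L

lemma takeDigits_sum (r : ℕ) (L : List ℕ) : (takeDigits r L).sum = min r L.sum := by
  induction L generalizing r with
  | nil => simp [takeDigits]
  | cons l L ih => simp [takeDigits, ih, List.sum_cons]; omega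

lemma takeDigits_length (r : ℕ) (L : List ℕ) : (takeDigits r L).length = L.length := by
  induction L generalizing r with
  | nil => simp [takeDigits]
  | cons l L ih => simp [takeDigits, ih]

lemma takeDigits_lt {r p : ℕ} {L : List ℕ} (h : ∀ x ∈ L, x < p) :
    ∀ x ∈ takeDigits r L, x < p := by
  induction L generalizing r with
  | nil => simp [takeDigits]
  | cons l L ih =>
    intro x hx
    rw [takeDigits, List.mem_cons] at hx
    rcases hx with hx | hx
    · have := h l (by simp)
      subst hx
      omega
    · exact ih (fun y hy => h y (by simp [hy])) x hx

lemma takeDigits_take (r i : ℕ) (L : List ℕ) :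
    (takeDigits r L).take i = takeDigits r (L.take i) := by
  induction L generalizing r i with
  | nil => simp [takeDigits]
  | cons l L ih =>
    cases i with
    | zero => simp [takeDigits]
    | succ i => simp [takeDigits, ih]

lemma takeDigits_zero (p : ℕ) (L : List ℕ) : Nat.ofDigits p (takeDigits 0 L) = 0 := by
  induction L with
  | nil => simp [takeDigits, Nat.ofDigits]
  | cons l L ih => simp [takeDigits, Nat.ofDigits, ih]

lemma ofDigits_takeDigits_le (p r : ℕ) (L : List ℕ) :
    Nat.ofDigits p (takeDigits r L) ≤ Nat.ofDigits p L := by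
  induction L generalizing r with
  | nil => simp [takeDigits]
  | cons l L ih =>
    simp only [takeDigits, Nat.ofDigits_cons]
    have := ih (r - min r l)
    have h1 : min r l ≤ l := min_le_right _ _
    have h2 : p * Nat.ofDigits p (takeDigits (r - min r l) L) ≤ p * Nat.ofDigits p L :=
      Nat.mul_le_mul_left p this
    push_cast
    omega

lemma ofDigits_takeDigits_lt {p : ℕ} (hp : 1 ≤ p) {r : ℕ} {L : List ℕ} (h : r < L.sum) :
    Nat.ofDigits p (takeDigits r L) < Nat.ofDigits p L := by
  induction L generalizing r with
  | nil => simp at h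
  | cons l L ih =>
    simp only [takeDigits, Nat.ofDigits_cons]
    have hsum : L.sum ≤ Nat.ofDigits p L := Nat.sum_le_ofDigits L hp
    simp only [List.sum_cons] at h
    by_cases hc : r ≤ l
    · have : min r l = r := min_eq_left hc
      rw [this]
      have h0 : Nat.ofDigits p (takeDigits (r - r) L) = 0 := by
        rw [Nat.sub_self]; exact takeDigits_zero p L
      rw [h0]
      have : Nat.ofDigits p L ≤ p * Nat.ofDigits p L := Nat.le_mul_of_pos_left _ hp
      push_cast
      omega
    · have hmin : min r l = l := min_eq_right (by omega)
      rw [hmin]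
      have hlt : r - l < L.sum := by omega
      have := ih hlt
      have : p * Nat.ofDigits p (takeDigits (r - min r l) L) < p * Nat.ofDigits p L := by
        rw [hmin]
        exact Nat.mul_lt_mul_of_pos_left this (by omega)
      rw [hmin] at this
      push_cast
      omega

/-- mod `p^i` of a number given by digits all `< p` is given by taking the first `i` digits. -/
lemma ofDigits_mod_pow {p : ℕ} (hp : 2 ≤ p) (i : ℕ) (D : List ℕ) (hD : ∀ x ∈ D, x < p) :
    Nat.ofDigits p D % p ^ i = Nat.ofDigits p (D.take i) := by
  have hsplit : Nat.ofDigits p D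
      = Nat.ofDigits p (D.take i) + p ^ ((D.take i).length) * Nat.ofDigits p (D.drop i) := by
    conv_lhs => rw [← List.take_append_drop i D]
    rw [Nat.ofDigits_append]
  have hlt : Nat.ofDigits p (D.take i) < p ^ i := by
    calc Nat.ofDigits p (D.take i) < p ^ (D.take i).length :=
          Nat.ofDigits_lt_base_pow_length (by omega) (fun x hx => hD x (List.mem_of_mem_take hx))
      _ ≤ p ^ i := Nat.pow_le_pow_right (by omega) (by simp [List.length_take])
  rcases le_or_gt i D.length with hle | hgt
  · have hlen : (D.take i).length = i := by simp [List.length_take]; omega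
    rw [hsplit, hlen, Nat.add_mul_mod_self_left, Nat.mod_eq_of_lt hlt]
  · have : D.take i = D := List.take_of_length_le (by omega)
    rw [this] at hlt ⊢
    exact Nat.mod_eq_of_lt hlt

theorem stmt_11 (n q p : ℕ) (hq : 0 < q) (hn : q < n) (hp : p.Prime)
    (hcong : p % q = 1 % q) (hα : q < (Nat.digits p n).sum) :
    (∃ k : ℕ, 0 < q * k ∧ q * k < n ∧ ¬ p ∣ Nat.choose n (q * k)) ∧
    padicValNat p (Finset.gcd ((Finset.range n).filter (fun k => 0 < k ∧ q * k < n))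
        (fun k => Nat.choose n (q * k))) = 0 := by
  have hp2 : 2 ≤ p := hp.two_le
  set L := Nat.digits p n with hL
  have hLlt : ∀ x ∈ L, x < p := fun x hx => Nat.digits_lt_base hp2 hx
  set E := takeDigits q L with hE
  set m := Nat.ofDigits p E with hm
  have hElt : ∀ x ∈ E, x < p := takeDigits_lt hLlt
  have hEsum : E.sum = q := by rw [hE, takeDigits_sum]; omega
  have hnL : Nat.ofDigits p L = n := Nat.ofDigits_digits p n
  -- m < n
  have hmn : m < n := by
    rw [hm, ← hnL]; exact ofDigits_takeDigits_lt (by omega) (by omega)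
  -- q ≤ m
  have hqm : q ≤ m := by
    calc q = E.sum := hEsum.symm
      _ ≤ m := Nat.sum_le_ofDigits E (by omega)
  -- q ∣ m
  have hqdvd : q ∣ m := by
    have hmod : m ≡ E.sum [MOD q] := by
      calc m = Nat.ofDigits p E := hm
        _ ≡ Nat.ofDigits 1 E [MOD q] := Nat.ofDigits_modEq' p 1 q hcong E
        _ = E.sum := Nat.ofDigits_one E
    have h5 : m % q = E.sum % q := hmod
    rw [hEsum, Nat.mod_self] at h5
    exact Nat.dvd_of_mod_eq_zero h5
  -- digit-domination mods
  have hmodle : ∀ i, m % p ^ i ≤ n % p ^ i := by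
    intro i
    rw [hm, ← hnL, ofDigits_mod_pow hp2 i E hElt, ofDigits_mod_pow hp2 i L hLlt,
      hE, takeDigits_take]
    exact ofDigits_takeDigits_le p q (L.take i)
  clear_value L E m
  -- p does not divide choose n m
  have hnotdvd : ¬ p ∣ Nat.choose n m := by
    rw [← emultiplicity_eq_zero]
    rw [Nat.Prime.emultiplicity_choose hp (le_of_lt hmn) (Nat.lt_succ_self (Nat.log p n))]
    simp only [Nat.cast_eq_zero, Finset.card_eq_zero]
    rw [Finset.eq_empty_iff_forall_notMem]
    intro i hi
    simp only [Finset.mem_filter, Finset.mem_Ico] at hi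
    obtain ⟨-, hcarry⟩ := hi
    have hdivle : m / p ^ i ≤ n / p ^ i := Nat.div_le_div_right (le_of_lt hmn)
    have hrm : m % p ^ i ≤ n % p ^ i := hmodle i
    have hrn : n % p ^ i < p ^ i := Nat.mod_lt _ (Nat.pow_pos (n := i) (by omega))
    have hsub : (n - m) % p ^ i = n % p ^ i - m % p ^ i := by
      obtain ⟨c, hc⟩ : ∃ c, n / p ^ i = m / p ^ i + c := ⟨n / p ^ i - m / p ^ i, by omega⟩
      have h1 : n = p ^ i * (n / p ^ i) + n % p ^ i := (Nat.div_add_mod n (p ^ i)).symm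
      have h2 : m = p ^ i * (m / p ^ i) + m % p ^ i := (Nat.div_add_mod m (p ^ i)).symm
      have h3 : p ^ i * (n / p ^ i) = p ^ i * (m / p ^ i) + p ^ i * c := by
        rw [hc, Nat.mul_add]
      have h4 : n - m = p ^ i * c + (n % p ^ i - m % p ^ i) := by omega
      rw [h4, Nat.mul_add_mod]
      exact Nat.mod_eq_of_lt (lt_of_le_of_lt (Nat.sub_le _ _) hrn)
    rw [hsub] at hcarry
    omega
  obtain ⟨k0, hk0⟩ := hqdvd
  have hwit : 0 < q * k0 ∧ q * k0 < n ∧ ¬ p ∣ Nat.choose n (q * k0) := by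
    rw [← hk0]
    exact ⟨by omega, hmn, hnotdvd⟩
  refine ⟨⟨k0, hwit⟩, ?_⟩
  have hmem : k0 ∈ (Finset.range n).filter (fun k => 0 < k ∧ q * k < n) := by
    simp only [Finset.mem_filter, Finset.mem_range]
    have h1 : 0 < k0 := by
      rcases Nat.eq_zero_or_pos k0 with h | h
      · exfalso; rw [h, Nat.mul_zero] at hwit; exact absurd hwit.1 (by omega)
      · exact h
    have h2 : k0 ≤ q * k0 := Nat.le_mul_of_pos_left k0 hq
    exact ⟨by omega, h1, hwit.2.1⟩
  have hgdvd : (Finset.gcd ((Finset.range n).filter (fun k => 0 < k ∧ q * k < n))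
      (fun k => Nat.choose n (q * k))) ∣ Nat.choose n (q * k0) :=
    Finset.gcd_dvd hmem
  have : ¬ p ∣ (Finset.gcd ((Finset.range n).filter (fun k => 0 < k ∧ q * k < n))
      (fun k => Nat.choose n (q * k))) :=
    fun h => hwit.2.2 (h.trans hgdvd)
  exact padicValNat.eq_zero_of_not_dvd this
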